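/- Let K_1 = Σ_{k=0}^{p-1} E_{kk} where E is the extended CMV matrix of p-periodic Verblunsky coefficients (indices mod p), so K_1 = −Σ_{j=0}^{p-1} α_{j-1} conj(α_j). Then with the Ablowitz-Ladik Poisson bracket, {α_j, 2 Re K_1} = i ρ_j² (α_{j-1} + α_{j+1}) for all j. -/

import Mathlib

open scoped ComplexConjugate

variable {ι : Type*} [Fintype ι] [DecidableEq ι]

/-- The Wirtinger derivative `∂f/∂α_j = (∂f/∂u_j - i ∂f/∂v_j)/2` of a function
of finitely many complex variables `α_j = u_j + i v_j`. -/
noncomputable def wirtD (f : (ι → ℂ) → ℂ) (x : ι → ℂ) (j : ι) : ℂ :=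
  (fderiv ℝ f x (Pi.single j 1) - Complex.I * fderiv ℝ f x (Pi.single j Complex.I)) / 2

/-- The Wirtinger derivative `∂f/∂ᾱ_j = (∂f/∂u_j + i ∂f/∂v_j)/2`. -/
noncomputable def wirtDbar (f : (ι → ℂ) → ℂ) (x : ι → ℂ) (j : ι) : ℂ :=
  (fderiv ℝ f x (Pi.single j 1) + Complex.I * fderiv ℝ f x (Pi.single j Complex.I)) / 2

/-- The Ablowitz–Ladik Poisson bracket
`{f,g} = i Σ_j ρ_j² [ (∂f/∂ᾱ_j)(∂g/∂α_j) − (∂f/∂α_j)(∂g/∂ᾱ_j) ]`,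
with `ρ_j² = 1 - |α_j|²`. -/
noncomputable def alPB (f g : (ι → ℂ) → ℂ) (x : ι → ℂ) : ℂ :=
  Complex.I * ∑ j, ((1 - ‖x j‖ ^ 2 : ℝ) : ℂ) *
    (wirtDbar f x j * wirtD g x j - wirtD f x j * wirtDbar g x j)


private lemma key (p : ℕ) [NeZero p] (x : ZMod p → ℂ) (j : ZMod p) (c : ℂ) :
    fderiv ℝ (fun y : ZMod p → ℂ => ((2 * (-∑ m : ZMod p, y (m - 1) * conj (y m)).re : ℝ) : ℂ)) x
      (Pi.single j c)
    = ((2 * (-(c * conj (x (j+1)) + x (j-1) * conj c)).re : ℝ) : ℂ) := by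
  set H : (ZMod p → ℂ) →L[ℝ] ℂ :=
      -∑ m : ZMod p,
        (x (m-1) • ((Complex.conjCLE : ℂ ≃L[ℝ] ℂ).toContinuousLinearMap.comp
            (ContinuousLinearMap.proj m : (ZMod p → ℂ) →L[ℝ] ℂ))
         + conj (x m) • (ContinuousLinearMap.proj (m-1) : (ZMod p → ℂ) →L[ℝ] ℂ)) with hH
  have hh : HasFDerivAt (fun y : ZMod p → ℂ => -∑ m : ZMod p, y (m - 1) * conj (y m)) H x := by
    rw [hH]
    apply HasFDerivAt.neg
    apply HasFDerivAt.fun_sum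
    intro m _
    have h1 : HasFDerivAt (fun y : ZMod p → ℂ => y (m-1))
        (ContinuousLinearMap.proj (m-1) : (ZMod p → ℂ) →L[ℝ] ℂ) x :=
      (ContinuousLinearMap.proj (m-1) : (ZMod p → ℂ) →L[ℝ] ℂ).hasFDerivAt
    have h2 : HasFDerivAt (fun y : ZMod p → ℂ => conj (y m))
        ((Complex.conjCLE : ℂ ≃L[ℝ] ℂ).toContinuousLinearMap.comp
          (ContinuousLinearMap.proj m : (ZMod p → ℂ) →L[ℝ] ℂ)) x :=
      ((Complex.conjCLE : ℂ ≃L[ℝ] ℂ).toContinuousLinearMap.comp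
          (ContinuousLinearMap.proj m : (ZMod p → ℂ) →L[ℝ] ℂ)).hasFDerivAt
    simpa using h1.fun_mul h2
  set T : ℂ →L[ℝ] ℂ := Complex.ofRealCLM.comp ((2:ℝ) • Complex.reCLM) with hT
  have hg : HasFDerivAt (fun y : ZMod p → ℂ =>
      ((2 * (-∑ m : ZMod p, y (m - 1) * conj (y m)).re : ℝ) : ℂ))
      (T.comp H) x := by
    exact T.hasFDerivAt.comp x hh
  rw [hg.fderiv]
  have e1 : ∀ m : ZMod p, (Pi.single j c : ZMod p → ℂ) (m - 1) = if m = j + 1 then c else 0 := by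
    intro m
    rw [Pi.single_apply]
    congr 1
    simp [sub_eq_iff_eq_add]
  have hHval : H (Pi.single j c) = -(c * conj (x (j+1)) + x (j-1) * conj c) := by
    rw [hH]
    simp only [ContinuousLinearMap.neg_apply, ContinuousLinearMap.sum_apply,
      ContinuousLinearMap.add_apply, ContinuousLinearMap.coe_smul', Pi.smul_apply,
      ContinuousLinearMap.comp_apply, ContinuousLinearMap.proj_apply,
      ContinuousLinearEquiv.coe_coe, Complex.conjCLE_apply, e1, Pi.single_apply]
    simp [apply_ite (starRingEnd ℂ), mul_ite, smul_eq_mul, Finset.sum_ite_eq',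
      Finset.sum_add_distrib, mul_comm]
    ring
  rw [ContinuousLinearMap.comp_apply, hHval, hT]
  simp
  ring

/-- With `K_1 = Σ_k E_{kk} = −Σ_j α_{j-1} conj(α_j)` (the sum
of the diagonal entries of the extended CMV matrix of `p`-periodic Verblunsky
coefficients, indices mod `p`), the Ablowitz–Ladik Poisson bracket satisfies
`{α_j, 2 Re K_1} = i ρ_j² (α_{j-1} + α_{j+1})` for all `j`. -/
theorem alPB_K1_bracket (p : ℕ) [NeZero p] (x : ZMod p → ℂ)
    (hx : ∀ j, ‖x j‖ < 1) (j : ZMod p) :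
    alPB (fun y => y j)
        (fun y => ((2 * (-∑ m : ZMod p, y (m - 1) * conj (y m)).re : ℝ) : ℂ)) x
      = Complex.I * ((1 - ‖x j‖ ^ 2 : ℝ) : ℂ) * (x (j - 1) + x (j + 1)) := by
  have hfd : fderiv ℝ (fun y : ZMod p → ℂ => y j) x
      = (ContinuousLinearMap.proj j : (ZMod p → ℂ) →L[ℝ] ℂ) :=
    (ContinuousLinearMap.proj j : (ZMod p → ℂ) →L[ℝ] ℂ).hasFDerivAt.fderiv
  unfold alPB
  rw [Fintype.sum_eq_single j, mul_assoc]
  · congr 1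
    unfold wirtD wirtDbar
    rw [hfd, key p x j 1, key p x j Complex.I]
    simp only [ContinuousLinearMap.proj_apply, Pi.single_eq_same]
    apply Complex.ext <;> simp <;> ring
  · intro k hk
    unfold wirtD wirtDbar
    rw [hfd]
    simp [Pi.single_eq_of_ne (Ne.symm hk)]
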